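/- Let N be a prime, let 0 < δ₁ ≤ δ₂, and let X, Y, Z ⊆ ℤ/Nℤ be such that each element of X, of Y, and of Z lies in at least δ₁N and at most δ₂N triangles of (X,Y,Z). Let l ≥ 1 be an integer, set L = 2l+1, and assume 1/20 ≤ L·δ₂ ≤ 1/10 and L < N. Fix x ∈ X. Then among all triples (a,b,d) ∈ ℤ/Nℤ × ℤ/Nℤ × (ℤ/Nℤ \ {0}) with x ∈ I_X, the proportion for which x lies in a good triangle of (X,Y,Z) with respect to (a,b,d) is at least δ₁/(50δ₂). -/

import Mathlib

/-- A triangle of subsets `X, Y, Z`: a triple `(x,y,z) ∈ X × Y × Z` with `x + y + z = 0`. -/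
def IsTriangle {G : Type*} [AddCommGroup G] (X Y Z : Set G) (x y z : G) : Prop :=
  x ∈ X ∧ y ∈ Y ∧ z ∈ Z ∧ x + y + z = 0

/-- `w` belongs to the "interval" `{a + r·d : r ∈ [-l, l]}` in `ℤ/Nℤ`. -/
def InInterval {N : ℕ} (a d : ZMod N) (l : ℕ) (w : ZMod N) : Prop :=
  ∃ r : ℤ, |r| ≤ (l : ℤ) ∧ w = a + (r : ZMod N) * d

/-- A triangle `(x,y,z)` of `(X,Y,Z)` is valid with respect to `(a,b,d)` if
`x ∈ I_X = a + [-l,l]d` and `y ∈ I_Y = b + [-l,l]d`. -/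
def IsValidTriangle {N : ℕ} (X Y Z : Set (ZMod N)) (a b d : ZMod N) (l : ℕ)
    (x y z : ZMod N) : Prop :=
  IsTriangle X Y Z x y z ∧ InInterval a d l x ∧ InInterval b d l y

/-- A valid triangle is good if each of `x`, `y` and `z` lies in no valid triangle of
`(X,Y,Z)` other than `(x,y,z)` itself. -/
def IsGoodTriangle {N : ℕ} (X Y Z : Set (ZMod N)) (a b d : ZMod N) (l : ℕ)
    (x y z : ZMod N) : Prop :=
  IsValidTriangle X Y Z a b d l x y z ∧
    ∀ x' y' z', IsValidTriangle X Y Z a b d l x' y' z' →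
      (x' = x ∨ y' = y ∨ z' = z) → (x' = x ∧ y' = y ∧ z' = z)

open Finset

open scoped Classical in
lemma ncard_setOf_eq {α : Type*} [Fintype α] (p : α → Prop) :
    {x | p x}.ncard = (Finset.univ.filter p).card := by
  rw [Set.ncard_eq_toFinset_card']
  simp [Set.toFinset_setOf]

open scoped Classical in
lemma card_pairs_eq {α : Type*} [Fintype α] (P : α → Prop) (f : α → α) :
    {p : α × α | P p.1 ∧ p.2 = f p.1}.ncard = (Finset.univ.filter P).card := by
  rw [ncard_setOf_eq]
  apply Finset.card_bij (fun p _ => p.1)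
  · intro a ha
    simp only [Finset.mem_filter, Finset.mem_univ, true_and] at ha ⊢
    exact ha.1
  · intro a ha b hb hab
    simp only [Finset.mem_filter, Finset.mem_univ, true_and] at ha hb
    exact Prod.ext hab (by rw [ha.2, hb.2, hab])
  · intro b hb
    simp only [Finset.mem_filter, Finset.mem_univ, true_and] at hb ⊢
    exact ⟨(b, f b), ⟨hb, rfl⟩, rfl⟩

lemma int_small_inj {N : ℕ} (hN : 0 < N) {r r' : ℤ} (hr : |r - r'| < N)
    (h : (r : ZMod N) = (r' : ZMod N)) : r = r' := by
  haveI : NeZero N := ⟨hN.ne'⟩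
  have h2 : ((r - r' : ℤ) : ZMod N) = 0 := by push_cast [h]; ring
  have h3 : (N:ℤ) ∣ (r - r') := by exact_mod_cast (ZMod.intCast_zmod_eq_zero_iff_dvd _ _).mp h2
  obtain ⟨c, hc⟩ := h3
  have hN' : (0:ℤ) < N := by exact_mod_cast hN
  rw [abs_lt] at hr
  have hc1 : c < 1 := by nlinarith
  have hc2 : -1 < c := by nlinarith
  have hc0 : c = 0 := by omega
  subst hc0
  simp at hc
  omega

lemma idx_unique {N : ℕ} (hN : N.Prime) {d : ZMod N} (hd : d ≠ 0) {r r' : ℤ}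
    (hrr : |r - r'| < N) (h : (r : ZMod N) * d = (r' : ZMod N) * d) : r = r' := by
  haveI := Fact.mk hN
  exact int_small_inj hN.pos hrr (mul_right_cancel₀ hd h)

set_option maxHeartbeats 2000000

theorem stmt7 {N : ℕ} (hN : N.Prime) (δ₁ δ₂ : ℝ) (hδ₁ : 0 < δ₁) (hδ₁₂ : δ₁ ≤ δ₂)
    (X Y Z : Set (ZMod N))
    (hX : ∀ x ∈ X, δ₁ * N ≤ ({p : ZMod N × ZMod N | IsTriangle X Y Z x p.1 p.2}.ncard : ℝ) ∧
      ({p : ZMod N × ZMod N | IsTriangle X Y Z x p.1 p.2}.ncard : ℝ) ≤ δ₂ * N)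
    (hY : ∀ y ∈ Y, δ₁ * N ≤ ({p : ZMod N × ZMod N | IsTriangle X Y Z p.1 y p.2}.ncard : ℝ) ∧
      ({p : ZMod N × ZMod N | IsTriangle X Y Z p.1 y p.2}.ncard : ℝ) ≤ δ₂ * N)
    (hZ : ∀ z ∈ Z, δ₁ * N ≤ ({p : ZMod N × ZMod N | IsTriangle X Y Z p.1 p.2 z}.ncard : ℝ) ∧
      ({p : ZMod N × ZMod N | IsTriangle X Y Z p.1 p.2 z}.ncard : ℝ) ≤ δ₂ * N)
    (l : ℕ) (hl : 1 ≤ l)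
    (hL1 : 1 / 20 ≤ (2 * l + 1 : ℝ) * δ₂) (hL2 : (2 * l + 1 : ℝ) * δ₂ ≤ 1 / 10)
    (hLN : 2 * l + 1 < N)
    (x : ZMod N) (hx : x ∈ X) :
    δ₁ / (50 * δ₂) *
        ({p : ZMod N × ZMod N × ZMod N | p.2.2 ≠ 0 ∧ InInterval p.1 p.2.2 l x}.ncard : ℝ) ≤
      ({p : ZMod N × ZMod N × ZMod N | p.2.2 ≠ 0 ∧ InInterval p.1 p.2.2 l x ∧
        ∃ y z, IsGoodTriangle X Y Z p.1 p.2.1 p.2.2 l x y z}.ncard : ℝ) := by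
  classical
  haveI : NeZero N := ⟨hN.pos.ne'⟩
  haveI := Fact.mk hN
  have hδ₂ : (0:ℝ) < δ₂ := lt_of_lt_of_le hδ₁ hδ₁₂
  set R : Finset ℤ := Finset.Icc (-(l:ℤ)) (l:ℤ) with hR
  have hRmem : ∀ r : ℤ, r ∈ R ↔ |r| ≤ (l:ℤ) := by
    intro r; rw [hR, Finset.mem_Icc, abs_le]
  have hRcard : R.card = 2*l+1 := by
    rw [hR, Int.card_Icc]; omega
  set Tx : Finset (ZMod N) := univ.filter (fun y => y ∈ Y ∧ -x - y ∈ Z) with hTx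
  set Tri2 : Finset (ZMod N × ZMod N) :=
    univ.filter (fun q => q.1 ∈ X ∧ q.2 ∈ Y ∧ -q.1 - q.2 ∈ Z) with hTri2
  set Ωf : Finset (ZMod N × ZMod N × ZMod N) :=
    univ.filter (fun p => p.2.2 ≠ 0 ∧ InInterval p.1 p.2.2 l x) with hΩf
  set Vf : (ZMod N × ZMod N × ZMod N) → Finset (ZMod N) :=
    (fun p => Tx.filter (fun y => InInterval p.2.1 p.2.2 l y)) with hVf
  set Wf : (ZMod N × ZMod N × ZMod N) → Finset (ZMod N × ZMod N) :=
    (fun p => Tri2.filter (fun q => InInterval p.1 p.2.2 l q.1 ∧ InInterval p.2.1 p.2.2 l q.2))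
    with hWf
  set Bf : (ZMod N × ZMod N × ZMod N) → Finset (ZMod N × (ZMod N × ZMod N)) :=
    (fun p => ((Vf p) ×ˢ (Wf p)).filter
      (fun yq => yq.2 ≠ (x, yq.1) ∧ (yq.2.1 = x ∨ yq.2.2 = yq.1 ∨ yq.2.1 + yq.2.2 = x + yq.1)))
    with hBf
  -- counts of triangles
  -- index extraction function
  obtain ⟨ix, hix⟩ : ∃ ix : ZMod N → ZMod N → ZMod N → ℤ, ∀ a d w, InInterval a d l w →
      |ix a d w| ≤ (l:ℤ) ∧ w = a + ((ix a d w : ℤ) : ZMod N) * d :=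
    ⟨fun a d w => if h : InInterval a d l w then h.choose else 0,
     fun a d w h => by simp only [dif_pos h]; exact h.choose_spec⟩
  have hTxcount : ({p : ZMod N × ZMod N | IsTriangle X Y Z x p.1 p.2}.ncard : ℕ) = Tx.card := by
    have hset : {p : ZMod N × ZMod N | IsTriangle X Y Z x p.1 p.2}
        = {p : ZMod N × ZMod N | (p.1 ∈ Y ∧ -x - p.1 ∈ Z) ∧ p.2 = -x - p.1} := by
      ext p
      constructor
      · rintro ⟨_, h2, h3, h4⟩
        have hp : p.2 = -x - p.1 := by linear_combination h4
        exact ⟨⟨h2, hp ▸ h3⟩, hp⟩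
      · rintro ⟨⟨h2, h3⟩, h4⟩
        exact ⟨hx, h2, h4 ▸ h3, by rw [h4]; ring⟩
    rw [hset, card_pairs_eq (fun y => y ∈ Y ∧ -x - y ∈ Z) (fun y => -x - y), hTx]
    congr!
  have hTxb : δ₁ * N ≤ (Tx.card:ℝ) ∧ (Tx.card:ℝ) ≤ δ₂*N := by
    obtain ⟨h1, h2⟩ := hX x hx
    rw [hTxcount] at h1 h2
    exact ⟨h1, h2⟩
  -- size of Ω
  have hΩcard : (Ωf.card : ℝ) ≤ (2*l+1 : ℝ) * N * ((N:ℝ)-1) := by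
    have hnat : Ωf.card ≤ (2*l+1) * (N * (N-1)) := by
      have := Finset.card_le_card_of_injOn
        (f := fun ω : ZMod N × ZMod N × ZMod N => (ix ω.1 ω.2.2 x, (ω.2.1, ω.2.2)))
        (s := Ωf) (t := R ×ˢ ((univ : Finset (ZMod N)) ×ˢ (univ.erase (0 : ZMod N))))
        ?_ ?_
      · calc Ωf.card ≤ _ := this
          _ = (2*l+1) * (N * (N-1)) := by
            simp [Finset.card_product, hRcard, Finset.card_erase_of_mem,
              Finset.card_univ, ZMod.card]
      · intro ω hω
        simp only [Finset.mem_coe, hΩf, Finset.mem_filter] at hω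
        obtain ⟨-, hd, hI⟩ := hω
        obtain ⟨hr, -⟩ := hix _ _ _ hI
        simp only [Finset.mem_coe, Finset.mem_product, Finset.mem_univ, Finset.mem_erase, true_and]
        exact ⟨(hRmem _).2 hr, hd, trivial⟩
      · intro ω hω ω₂ hω₂ heq
        simp only [Finset.coe_filter, Set.mem_setOf_eq, hΩf, Finset.mem_univ, true_and] at hω hω₂
        obtain ⟨hd, hI⟩ := hω
        obtain ⟨hd₂, hI₂⟩ := hω₂
        obtain ⟨-, hs⟩ := hix _ _ _ hI
        obtain ⟨-, hs₂⟩ := hix _ _ _ hI₂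
        simp only [Prod.mk.injEq] at heq
        obtain ⟨hre, hbe, hde⟩ := heq
        have ha : ω.1 = ω₂.1 := by
          rw [hre, hde] at hs
          have := hs.symm.trans hs₂
          exact add_right_cancel this
        exact Prod.ext ha (Prod.ext hbe hde)
    calc (Ωf.card : ℝ) ≤ ((2*l+1) * (N * (N-1)) : ℕ) := by exact_mod_cast hnat
      _ = (2*l+1 : ℝ) * N * ((N:ℝ)-1) := by
        push_cast [Nat.cast_sub hN.one_le]
        ring
  -- first moment
  have hkey1 : ∀ y : ZMod N, (N-1)*((2*l+1)*(2*l+1)) ≤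
      (Ωf.filter (fun ω => InInterval ω.2.1 ω.2.2 l y)).card := by
    intro y
    have hinj := Finset.card_le_card_of_injOn
      (f := fun t : ZMod N × ℤ × ℤ => ((x - (t.2.1 : ZMod N)*t.1, (y - (t.2.2 : ZMod N)*t.1, t.1)) : ZMod N × ZMod N × ZMod N))
      (s := (univ.erase (0:ZMod N)) ×ˢ (R ×ˢ R))
      (t := Ωf.filter (fun ω => InInterval ω.2.1 ω.2.2 l y)) ?_ ?_
    · calc (N-1)*((2*l+1)*(2*l+1))
          = ((univ.erase (0:ZMod N)) ×ˢ (R ×ˢ R)).card := by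
            simp [Finset.card_product, hRcard, Finset.card_erase_of_mem,
              Finset.card_univ, ZMod.card]
        _ ≤ _ := hinj
    · rintro ⟨d, r, s⟩ hmem
      simp only [Finset.mem_coe, Finset.mem_product, Finset.mem_erase, Finset.mem_univ, and_true, true_and] at hmem
      obtain ⟨hd, hr, hs⟩ := hmem
      simp only [Finset.mem_coe, Finset.mem_filter, hΩf]
      refine ⟨⟨Finset.mem_univ _, hd, ⟨r, (hRmem r).1 hr, by ring⟩⟩, ⟨s, (hRmem s).1 hs, by ring⟩⟩
    · rintro ⟨d, r, s⟩ hmem ⟨d₂, r₂, s₂⟩ hmem₂ heq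
      simp only [Finset.coe_product, Set.mem_prod, Finset.mem_coe, Finset.mem_erase,
        Finset.mem_univ, and_true, true_and] at hmem hmem₂
      obtain ⟨hd, hr, hs⟩ := hmem
      obtain ⟨hd₂, hr₂, hs₂⟩ := hmem₂
      rw [hRmem] at hr hs hr₂ hs₂
      simp only [Prod.mk.injEq] at heq
      obtain ⟨h1, h2, h3⟩ := heq
      subst h3
      have hrr : r = r₂ := by
        refine idx_unique hN hd ?_ (sub_right_inj.mp h1)
        rw [abs_lt]; rw [abs_le] at hr hr₂; omega
      have hss : s = s₂ := by
        refine idx_unique hN hd ?_ (sub_right_inj.mp h2)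
        rw [abs_lt]; rw [abs_le] at hs hs₂; omega
      simp [hrr, hss]
  have hSV : ((Tx.card : ℝ)) * (((N:ℝ)-1) * (2*l+1:ℝ)^2) ≤ ∑ ω ∈ Ωf, ((Vf ω).card : ℝ) := by
    have hnat : Tx.card * ((N-1)*((2*l+1)*(2*l+1))) ≤ ∑ ω ∈ Ωf, (Vf ω).card := by
      have hswap : ∑ ω ∈ Ωf, (Vf ω).card
          = ∑ y ∈ Tx, (Ωf.filter (fun ω => InInterval ω.2.1 ω.2.2 l y)).card := by
        simp only [hVf, Finset.card_filter]
        exact Finset.sum_comm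
      rw [hswap]
      calc Tx.card * ((N-1)*((2*l+1)*(2*l+1)))
          = ∑ _y ∈ Tx, (N-1)*((2*l+1)*(2*l+1)) := by rw [Finset.sum_const, smul_eq_mul]
        _ ≤ _ := Finset.sum_le_sum (fun y _ => hkey1 y)
    calc ((Tx.card : ℝ)) * (((N:ℝ)-1) * (2*l+1:ℝ)^2)
        = ((Tx.card * ((N-1)*((2*l+1)*(2*l+1))) : ℕ) : ℝ) := by
          push_cast [Nat.cast_sub hN.one_le]
          ring
      _ ≤ ((∑ ω ∈ Ωf, (Vf ω).card : ℕ) : ℝ) := by exact_mod_cast hnat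
      _ = ∑ ω ∈ Ωf, ((Vf ω).card : ℝ) := by push_cast; rfl
  -- second moment
  have hoffcard : ((R.offDiag) ×ˢ R).card = (2*l+1)^2 * (2*l) := by
    rw [Finset.card_product, Finset.offDiag_card, hRcard]
    have h1 : (2*l+1)*(2*l+1) - (2*l+1) = (2*l+1)*(2*l) := Nat.sub_eq_of_eq_add (by ring)
    rw [h1]; ring
  have pairA : ∀ w w' u : ZMod N, w ≠ w' →
      (univ.filter (fun ω : ZMod N × ZMod N × ZMod N =>
        ω.2.2 ≠ 0 ∧ InInterval ω.1 ω.2.2 l w ∧ InInterval ω.1 ω.2.2 l w'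
          ∧ InInterval ω.2.1 ω.2.2 l u)).card ≤ (2*l+1)^2 * (2*l) := by
    intro w w' u hww
    rw [← hoffcard]
    apply Finset.card_le_card_of_injOn
      (f := fun ω => ((ix ω.1 ω.2.2 w, ix ω.1 ω.2.2 w'), ix ω.2.1 ω.2.2 u))
    · intro ω hω
      rw [Finset.mem_coe, Finset.mem_filter] at hω
      obtain ⟨-, hd, h1, h2, h3⟩ := hω
      obtain ⟨hr1, he1⟩ := hix _ _ _ h1
      obtain ⟨hr2, he2⟩ := hix _ _ _ h2
      obtain ⟨hr3, he3⟩ := hix _ _ _ h3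
      simp only [Finset.mem_coe, Finset.mem_product, Finset.mem_offDiag]
      refine ⟨⟨(hRmem _).2 hr1, (hRmem _).2 hr2, ?_⟩, (hRmem _).2 hr3⟩
      intro hcontr
      apply hww
      rw [he1, he2, hcontr]
    · rintro ⟨a, b, d⟩ hω ⟨a₂, b₂, d₂⟩ hω₂ heq
      simp only [Finset.coe_filter, Set.mem_setOf_eq, Finset.mem_univ, true_and] at hω hω₂
      dsimp only at hω hω₂ heq
      obtain ⟨hd, h1, h2, h3⟩ := hω
      obtain ⟨hd₂, h1₂, h2₂, h3₂⟩ := hω₂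
      obtain ⟨hr1, he1⟩ := hix _ _ _ h1
      obtain ⟨hr2, he2⟩ := hix _ _ _ h2
      obtain ⟨hr3, he3⟩ := hix _ _ _ h3
      obtain ⟨hr1₂, he1₂⟩ := hix _ _ _ h1₂
      obtain ⟨hr2₂, he2₂⟩ := hix _ _ _ h2₂
      obtain ⟨hr3₂, he3₂⟩ := hix _ _ _ h3₂
      simp only [Prod.mk.injEq] at heq
      obtain ⟨⟨q1, q2⟩, q3⟩ := heq
      rw [← q1] at he1₂
      rw [← q2] at he2₂
      rw [← q3] at he3₂
      have hrne : ix a d w ≠ ix a d w' := by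
        intro hc; apply hww; rw [he1, he2, hc]
      have hkne : ((ix a d w' - ix a d w : ℤ) : ZMod N) ≠ 0 := by
        intro hc
        apply hrne
        have h0 : ((ix a d w' - ix a d w : ℤ) : ZMod N) = ((0:ℤ) : ZMod N) := by
          rw [hc]; norm_num
        have := int_small_inj hN.pos ?_ h0
        · omega
        · rw [abs_lt]
          rw [abs_le] at hr1 hr2
          omega
      have e1 : ((ix a d w' - ix a d w : ℤ) : ZMod N) * d
          = ((ix a d w' - ix a d w : ℤ) : ZMod N) * d₂ := by
        push_cast
        linear_combination he1 - he2 + he2₂ - he1₂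
      have hdd : d = d₂ := mul_left_cancel₀ hkne e1
      have haa : a = a₂ := by
        rw [← hdd] at he1₂
        exact add_right_cancel (he1.symm.trans he1₂)
      have hbb : b = b₂ := by
        rw [← hdd] at he3₂
        exact add_right_cancel (he3.symm.trans he3₂)
      simp [haa, hbb, hdd]
  have pairB : ∀ w w' u : ZMod N, w ≠ w' →
      (univ.filter (fun ω : ZMod N × ZMod N × ZMod N =>
        ω.2.2 ≠ 0 ∧ InInterval ω.2.1 ω.2.2 l w ∧ InInterval ω.2.1 ω.2.2 l w'
          ∧ InInterval ω.1 ω.2.2 l u)).card ≤ (2*l+1)^2 * (2*l) := by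
    intro w w' u hww
    refine le_trans (Finset.card_le_card_of_injOn
      (f := fun ω : ZMod N × ZMod N × ZMod N => ((ω.2.1, ω.1, ω.2.2) : ZMod N × ZMod N × ZMod N))
      ?_ ?_) (pairA w w' u hww)
    · intro ω hω
      simp only [Finset.mem_coe, Finset.mem_filter, Finset.mem_univ, true_and] at hω ⊢
      exact hω
    · intro ω _ ω₂ _ heq
      simp only [Prod.mk.injEq] at heq
      exact Prod.ext heq.2.1 (Prod.ext heq.1 heq.2.2)
  set Df : Finset (ZMod N × (ZMod N × ZMod N)) := (Tx ×ˢ Tri2).filter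
    (fun yq => yq.2 ≠ (x, yq.1) ∧
      (yq.2.1 = x ∨ yq.2.2 = yq.1 ∨ yq.2.1 + yq.2.2 = x + yq.1)) with hDf
  have hBeq : ∀ ω : ZMod N × ZMod N × ZMod N, Bf ω = (Tx ×ˢ Tri2).filter (fun yq =>
      (yq.2 ≠ (x, yq.1) ∧ (yq.2.1 = x ∨ yq.2.2 = yq.1 ∨ yq.2.1 + yq.2.2 = x + yq.1)) ∧
      (InInterval ω.2.1 ω.2.2 l yq.1 ∧ InInterval ω.1 ω.2.2 l yq.2.1
        ∧ InInterval ω.2.1 ω.2.2 l yq.2.2)) := by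
    intro ω
    rw [hBf, hVf, hWf]
    ext yq
    simp only [Finset.mem_filter, Finset.mem_product]
    tauto
  have hSBnat : ∑ ω ∈ Ωf, (Bf ω).card ≤ Df.card * ((2*l+1)^2 * (2*l)) := by
    have perq : ∀ yq ∈ Tx ×ˢ Tri2,
        (Ωf.filter (fun ω => (yq.2 ≠ (x, yq.1) ∧
          (yq.2.1 = x ∨ yq.2.2 = yq.1 ∨ yq.2.1 + yq.2.2 = x + yq.1)) ∧
          (InInterval ω.2.1 ω.2.2 l yq.1 ∧ InInterval ω.1 ω.2.2 l yq.2.1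
            ∧ InInterval ω.2.1 ω.2.2 l yq.2.2))).card ≤
        (if (yq.2 ≠ (x, yq.1) ∧ (yq.2.1 = x ∨ yq.2.2 = yq.1 ∨ yq.2.1 + yq.2.2 = x + yq.1))
          then (2*l+1)^2 * (2*l) else 0) := by
      intro yq _
      by_cases hc : (yq.2 ≠ (x, yq.1) ∧
          (yq.2.1 = x ∨ yq.2.2 = yq.1 ∨ yq.2.1 + yq.2.2 = x + yq.1))
      · rw [if_pos hc]
        have hne : yq.2.1 ≠ x ∨ yq.2.2 ≠ yq.1 := by
          by_contra hcon
          push_neg at hcon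
          exact hc.1 (Prod.ext hcon.1 hcon.2)
        rcases hne with hne | hne
        · refine le_trans (Finset.card_le_card ?_) (pairA x yq.2.1 yq.1 (Ne.symm hne))
          intro ω hω
          rw [hΩf] at hω
          simp only [Finset.filter_filter, Finset.mem_filter, Finset.mem_univ, true_and] at hω ⊢
          obtain ⟨⟨hd, hIX⟩, -, hi1, hi2, hi3⟩ := hω
          exact ⟨hd, hIX, hi2, hi1⟩
        · refine le_trans (Finset.card_le_card ?_) (pairB yq.1 yq.2.2 x (Ne.symm hne))
          intro ω hω
          rw [hΩf] at hω
          simp only [Finset.filter_filter, Finset.mem_filter, Finset.mem_univ, true_and] at hω ⊢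
          obtain ⟨⟨hd, hIX⟩, -, hi1, hi2, hi3⟩ := hω
          exact ⟨hd, hi1, hi3, hIX⟩
      · rw [if_neg hc]
        have : Ωf.filter (fun ω => (yq.2 ≠ (x, yq.1) ∧
            (yq.2.1 = x ∨ yq.2.2 = yq.1 ∨ yq.2.1 + yq.2.2 = x + yq.1)) ∧
            (InInterval ω.2.1 ω.2.2 l yq.1 ∧ InInterval ω.1 ω.2.2 l yq.2.1
              ∧ InInterval ω.2.1 ω.2.2 l yq.2.2)) = ∅ :=
          Finset.filter_false_of_mem (fun ω _ hp => hc hp.1)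
        rw [this]
        simp
    calc ∑ ω ∈ Ωf, (Bf ω).card
        = ∑ ω ∈ Ωf, ∑ yq ∈ Tx ×ˢ Tri2, (if (yq.2 ≠ (x, yq.1) ∧
            (yq.2.1 = x ∨ yq.2.2 = yq.1 ∨ yq.2.1 + yq.2.2 = x + yq.1)) ∧
            (InInterval ω.2.1 ω.2.2 l yq.1 ∧ InInterval ω.1 ω.2.2 l yq.2.1
              ∧ InInterval ω.2.1 ω.2.2 l yq.2.2) then 1 else 0) := by
          refine Finset.sum_congr rfl (fun ω _ => ?_)
          rw [hBeq ω, Finset.card_filter]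
      _ = ∑ yq ∈ Tx ×ˢ Tri2, ∑ ω ∈ Ωf, (if (yq.2 ≠ (x, yq.1) ∧
            (yq.2.1 = x ∨ yq.2.2 = yq.1 ∨ yq.2.1 + yq.2.2 = x + yq.1)) ∧
            (InInterval ω.2.1 ω.2.2 l yq.1 ∧ InInterval ω.1 ω.2.2 l yq.2.1
              ∧ InInterval ω.2.1 ω.2.2 l yq.2.2) then 1 else 0) := Finset.sum_comm
      _ = ∑ yq ∈ Tx ×ˢ Tri2, (Ωf.filter (fun ω => (yq.2 ≠ (x, yq.1) ∧
            (yq.2.1 = x ∨ yq.2.2 = yq.1 ∨ yq.2.1 + yq.2.2 = x + yq.1)) ∧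
            (InInterval ω.2.1 ω.2.2 l yq.1 ∧ InInterval ω.1 ω.2.2 l yq.2.1
              ∧ InInterval ω.2.1 ω.2.2 l yq.2.2))).card := by
          refine Finset.sum_congr rfl (fun yq _ => ?_)
          rw [Finset.card_filter]
      _ ≤ ∑ yq ∈ Tx ×ˢ Tri2, (if (yq.2 ≠ (x, yq.1) ∧
            (yq.2.1 = x ∨ yq.2.2 = yq.1 ∨ yq.2.1 + yq.2.2 = x + yq.1))
            then (2*l+1)^2 * (2*l) else 0) := Finset.sum_le_sum perq
      _ = ∑ yq ∈ Df, (2*l+1)^2 * (2*l) := (Finset.sum_filter _ _).symm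
      _ = Df.card * ((2*l+1)^2 * (2*l)) := by rw [Finset.sum_const, smul_eq_mul]
  -- degree bounds
  have hYdeg : ∀ y ∈ Tx, ((Tri2.filter (fun q => q.2 = y)).card : ℝ) ≤ δ₂ * N := by
    intro y hy
    have hyYZ : y ∈ Y ∧ -x - y ∈ Z := by
      have h := hy; rw [hTx, Finset.mem_filter] at h; exact h.2
    have h2 := (hY y hyYZ.1).2
    have hset : {p : ZMod N × ZMod N | IsTriangle X Y Z p.1 y p.2}
        = {p : ZMod N × ZMod N | (p.1 ∈ X ∧ -p.1 - y ∈ Z) ∧ p.2 = -p.1 - y} := by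
      ext p
      constructor
      · rintro ⟨h1, _, h3, h4⟩
        have hp : p.2 = -p.1 - y := by linear_combination h4
        exact ⟨⟨h1, hp ▸ h3⟩, hp⟩
      · rintro ⟨⟨ha, hb⟩, hp⟩
        exact ⟨ha, hyYZ.1, hp ▸ hb, by rw [hp]; ring⟩
    rw [hset, card_pairs_eq (fun a => a ∈ X ∧ -a - y ∈ Z) (fun a => -a - y)] at h2
    have hcardeq : (Tri2.filter (fun q => q.2 = y)).card
        = (univ.filter (fun a : ZMod N => a ∈ X ∧ -a - y ∈ Z)).card := by
      apply Finset.card_bij (fun q _ => q.1)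
      · intro q hq
        rw [Finset.mem_filter, hTri2, Finset.mem_filter] at hq
        obtain ⟨⟨-, hq1, hq2, hq3⟩, hq4⟩ := hq
        simp only [Finset.mem_filter, Finset.mem_univ, true_and]
        exact ⟨hq1, hq4 ▸ hq3⟩
      · intro q hq q₂ hq₂ heq
        rw [Finset.mem_filter] at hq hq₂
        exact Prod.ext heq (hq.2.trans hq₂.2.symm)
      · intro a ha
        simp only [Finset.mem_filter, Finset.mem_univ, true_and] at ha
        refine ⟨(a, y), ?_, rfl⟩
        rw [Finset.mem_filter, hTri2, Finset.mem_filter]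
        exact ⟨⟨Finset.mem_univ _, ha.1, hyYZ.1, ha.2⟩, rfl⟩
    rw [hcardeq]
    convert h2 using 2
    congr!
  have hZdeg : ∀ y ∈ Tx, ((Tri2.filter (fun q => q.1 + q.2 = x + y)).card : ℝ) ≤ δ₂ * N := by
    intro y hy
    have hyYZ : y ∈ Y ∧ -x - y ∈ Z := by
      have h := hy; rw [hTx, Finset.mem_filter] at h; exact h.2
    have h2 := (hZ (-x - y) hyYZ.2).2
    have hset : {p : ZMod N × ZMod N | IsTriangle X Y Z p.1 p.2 (-x - y)}
        = {p : ZMod N × ZMod N | (p.1 ∈ X ∧ x + y - p.1 ∈ Y) ∧ p.2 = x + y - p.1} := by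
      ext p
      constructor
      · rintro ⟨h1, h2', _, h4⟩
        have hp : p.2 = x + y - p.1 := by linear_combination h4
        exact ⟨⟨h1, hp ▸ h2'⟩, hp⟩
      · rintro ⟨⟨ha, hb⟩, hp⟩
        exact ⟨ha, hp ▸ hb, hyYZ.2, by rw [hp]; ring⟩
    rw [hset, card_pairs_eq (fun a => a ∈ X ∧ x + y - a ∈ Y) (fun a => x + y - a)] at h2
    have hcardeq : (Tri2.filter (fun q => q.1 + q.2 = x + y)).card
        = (univ.filter (fun a : ZMod N => a ∈ X ∧ x + y - a ∈ Y)).card := by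
      apply Finset.card_bij (fun q _ => q.1)
      · intro q hq
        rw [Finset.mem_filter, hTri2, Finset.mem_filter] at hq
        obtain ⟨⟨-, hq1, hq2, hq3⟩, hq4⟩ := hq
        simp only [Finset.mem_filter, Finset.mem_univ, true_and]
        have : x + y - q.1 = q.2 := by linear_combination -hq4
        exact ⟨hq1, this ▸ hq2⟩
      · intro q hq q₂ hq₂ heq
        rw [Finset.mem_filter] at hq hq₂
        refine Prod.ext heq ?_
        have e1 : q.2 = x + y - q.1 := by linear_combination hq.2
        have e2 : q₂.2 = x + y - q₂.1 := by linear_combination hq₂.2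
        rw [e1, e2, heq]
      · intro a ha
        simp only [Finset.mem_filter, Finset.mem_univ, true_and] at ha
        refine ⟨(a, x + y - a), ?_, rfl⟩
        rw [Finset.mem_filter, hTri2, Finset.mem_filter]
        refine ⟨⟨Finset.mem_univ _, ha.1, ha.2, ?_⟩, by ring⟩
        have : -a - (x + y - a) = -x - y := by ring
        rw [this]
        exact hyYZ.2
    rw [hcardeq]
    convert h2 using 2
    congr!
  have hXdeg : ((Tri2.filter (fun q => q.1 = x)).card : ℝ) ≤ δ₂ * N := by
    have hcardeq : (Tri2.filter (fun q => q.1 = x)).card = Tx.card := by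
      apply Finset.card_bij (fun q _ => q.2)
      · intro q hq
        rw [Finset.mem_filter, hTri2, Finset.mem_filter] at hq
        obtain ⟨⟨-, hq1, hq2, hq3⟩, hq4⟩ := hq
        rw [hTx]
        simp only [Finset.mem_filter, Finset.mem_univ, true_and]
        exact ⟨hq2, hq4 ▸ hq3⟩
      · intro q hq q₂ hq₂ heq
        rw [Finset.mem_filter] at hq hq₂
        exact Prod.ext (hq.2.trans hq₂.2.symm) heq
      · intro y hy
        have hyYZ : y ∈ Y ∧ -x - y ∈ Z := by
          have h := hy; rw [hTx, Finset.mem_filter] at h; exact h.2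
        refine ⟨(x, y), ?_, rfl⟩
        rw [Finset.mem_filter, hTri2, Finset.mem_filter]
        exact ⟨⟨Finset.mem_univ _, hx, hyYZ.1, hyYZ.2⟩, rfl⟩
    rw [hcardeq]
    exact hTxb.2
  -- D card bound
  have hDsub : Df ⊆ ((Tx ×ˢ Tri2).filter (fun yq => yq.2.1 = x)) ∪
      (((Tx ×ˢ Tri2).filter (fun yq => yq.2.2 = yq.1)) ∪
        ((Tx ×ˢ Tri2).filter (fun yq => yq.2.1 + yq.2.2 = x + yq.1))) := by
    intro yq hyq
    rw [hDf, Finset.mem_filter] at hyq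
    simp only [Finset.mem_union, Finset.mem_filter]
    tauto
  have hD1 : (((Tx ×ˢ Tri2).filter (fun yq => yq.2.1 = x)).card : ℝ) ≤ (Tx.card : ℝ) * (δ₂ * N) := by
    have hnat : ((Tx ×ˢ Tri2).filter (fun yq => yq.2.1 = x)).card ≤ Tx.card * Tx.card := by
      have := Finset.card_le_card_of_injOn
        (f := fun yq : ZMod N × (ZMod N × ZMod N) => ((yq.1, yq.2.2) : ZMod N × ZMod N))
        (s := (Tx ×ˢ Tri2).filter (fun yq => yq.2.1 = x)) (t := Tx ×ˢ Tx) ?_ ?_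
      · simpa [Finset.card_product] using this
      · intro yq hyq
        rw [Finset.mem_coe, Finset.mem_filter, Finset.mem_product] at hyq
        obtain ⟨⟨hy1, hy2⟩, hy3⟩ := hyq
        rw [hTri2, Finset.mem_filter] at hy2
        obtain ⟨-, -, hq2, hq3⟩ := hy2
        rw [Finset.mem_coe, Finset.mem_product]
        refine ⟨hy1, ?_⟩
        rw [hTx]
        simp only [Finset.mem_filter, Finset.mem_univ, true_and]
        exact ⟨hq2, hy3 ▸ hq3⟩
      · intro yq hyq yq₂ hyq₂ heq
        simp only [Finset.coe_filter, Set.mem_setOf_eq] at hyq hyq₂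
        simp only [Prod.mk.injEq] at heq
        exact Prod.ext heq.1 (Prod.ext (hyq.2.trans hyq₂.2.symm) heq.2)
    calc (((Tx ×ˢ Tri2).filter (fun yq => yq.2.1 = x)).card : ℝ)
        ≤ (Tx.card : ℝ) * Tx.card := by exact_mod_cast hnat
      _ ≤ (Tx.card : ℝ) * (δ₂ * N) := by
          apply mul_le_mul_of_nonneg_left hTxb.2 (Nat.cast_nonneg _)
  have hD2 : (((Tx ×ˢ Tri2).filter (fun yq => yq.2.2 = yq.1)).card : ℝ)
      ≤ (Tx.card : ℝ) * (δ₂ * N) := by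
    have hnat : ((Tx ×ˢ Tri2).filter (fun yq => yq.2.2 = yq.1)).card
        = ∑ y ∈ Tx, (Tri2.filter (fun q => q.2 = y)).card := by
      rw [Finset.card_filter, Finset.sum_product]
      exact Finset.sum_congr rfl (fun y _ => (Finset.card_filter _ _).symm)
    calc (((Tx ×ˢ Tri2).filter (fun yq => yq.2.2 = yq.1)).card : ℝ)
        = ∑ y ∈ Tx, ((Tri2.filter (fun q => q.2 = y)).card : ℝ) := by
          rw [hnat]; push_cast; rfl
      _ ≤ ∑ _y ∈ Tx, δ₂ * N := Finset.sum_le_sum hYdeg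
      _ = (Tx.card : ℝ) * (δ₂ * N) := by rw [Finset.sum_const, nsmul_eq_mul]
  have hD3 : (((Tx ×ˢ Tri2).filter (fun yq => yq.2.1 + yq.2.2 = x + yq.1)).card : ℝ)
      ≤ (Tx.card : ℝ) * (δ₂ * N) := by
    have hnat : ((Tx ×ˢ Tri2).filter (fun yq => yq.2.1 + yq.2.2 = x + yq.1)).card
        = ∑ y ∈ Tx, (Tri2.filter (fun q => q.1 + q.2 = x + y)).card := by
      rw [Finset.card_filter, Finset.sum_product]
      exact Finset.sum_congr rfl (fun y _ => (Finset.card_filter _ _).symm)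
    calc (((Tx ×ˢ Tri2).filter (fun yq => yq.2.1 + yq.2.2 = x + yq.1)).card : ℝ)
        = ∑ y ∈ Tx, ((Tri2.filter (fun q => q.1 + q.2 = x + y)).card : ℝ) := by
          rw [hnat]; push_cast; rfl
      _ ≤ ∑ _y ∈ Tx, δ₂ * N := Finset.sum_le_sum hZdeg
      _ = (Tx.card : ℝ) * (δ₂ * N) := by rw [Finset.sum_const, nsmul_eq_mul]
  have hDcard : (Df.card : ℝ) ≤ 3 * (Tx.card : ℝ) * (δ₂ * N) := by
    have h1 := Finset.card_le_card hDsub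
    have h2 := le_trans h1 (le_trans (Finset.card_union_le _ _)
      (Nat.add_le_add_left (Finset.card_union_le _ _) _))
    have h3 : (Df.card : ℝ) ≤ (((Tx ×ˢ Tri2).filter (fun yq => yq.2.1 = x)).card : ℝ)
        + ((((Tx ×ˢ Tri2).filter (fun yq => yq.2.2 = yq.1)).card : ℝ)
          + (((Tx ×ˢ Tri2).filter (fun yq => yq.2.1 + yq.2.2 = x + yq.1)).card : ℝ)) := by
      exact_mod_cast h2
    linarith
  have hSB : ∑ ω ∈ Ωf, ((Bf ω).card : ℝ) ≤
      3 * (Tx.card:ℝ) * (δ₂*N) * ((2*l+1:ℝ)^2 * (2*l:ℝ)) := by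
    calc ∑ ω ∈ Ωf, ((Bf ω).card : ℝ)
        = ((∑ ω ∈ Ωf, (Bf ω).card : ℕ) : ℝ) := by push_cast; rfl
      _ ≤ ((Df.card * ((2*l+1)^2 * (2*l)) : ℕ) : ℝ) := by exact_mod_cast hSBnat
      _ = (Df.card : ℝ) * ((2*l+1:ℝ)^2 * (2*l:ℝ)) := by push_cast; ring
      _ ≤ 3 * (Tx.card:ℝ) * (δ₂*N) * ((2*l+1:ℝ)^2 * (2*l:ℝ)) := by
          apply mul_le_mul_of_nonneg_right hDcard
          positivity
  -- pointwise
  have hpoint : ∀ ω ∈ Ωf, ((Vf ω).card : ℝ) - ((Bf ω).card:ℝ) ≤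
      (if (∃ y z, IsGoodTriangle X Y Z ω.1 ω.2.1 ω.2.2 l x y z) then (1:ℝ) else 0) := by
    intro ω hω
    have hite : (0:ℝ) ≤ (if (∃ y z, IsGoodTriangle X Y Z ω.1 ω.2.1 ω.2.2 l x y z)
        then (1:ℝ) else 0) := by split <;> norm_num
    rw [hΩf, Finset.mem_filter] at hω
    obtain ⟨-, hd, hIx⟩ := hω
    by_cases h2 : 2 ≤ (Vf ω).card
    · have hex : ∀ y : ZMod N, ∃ y', y' ∈ Vf ω ∧ y' ≠ y := by
        intro y
        obtain ⟨b, hb, hbne⟩ := Finset.exists_mem_ne h2 y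
        exact ⟨b, hb, hbne⟩
      have hBV : (Vf ω).card ≤ (Bf ω).card := by
        apply Finset.card_le_card_of_injOn (f := fun y => ((hex y).choose, ((x, y) : ZMod N × ZMod N)))
        · intro y hy
          obtain ⟨hy'mem, hy'ne⟩ := (hex y).choose_spec
          have hyTx : y ∈ Tx ∧ InInterval ω.2.1 ω.2.2 l y := by
            rw [hVf] at hy; exact Finset.mem_filter.mp hy
          have hyYZ : y ∈ Y ∧ -x - y ∈ Z := by
            have := Finset.mem_filter.mp (hTx ▸ hyTx.1); exact this.2
          rw [hBf]
          simp only [Finset.mem_coe, Finset.mem_filter, Finset.mem_product]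
          refine ⟨⟨hy'mem, ?_⟩, ?_, Or.inl trivial⟩
          · rw [hWf]
            simp only [Finset.mem_filter]
            refine ⟨?_, hIx, hyTx.2⟩
            rw [hTri2]
            simp only [Finset.mem_filter, Finset.mem_univ, true_and]
            exact ⟨hx, hyYZ.1, hyYZ.2⟩
          · simp only [ne_eq, Prod.mk.injEq, not_and]
            intro _ h
            exact hy'ne h.symm
        · intro y _ y₂ _ heq
          simpa using congrArg (fun p => p.2.2) heq
      have hBV' : ((Vf ω).card : ℝ) ≤ ((Bf ω).card : ℝ) := by exact_mod_cast hBV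
      linarith
    · by_cases h1 : (Vf ω).card = 1
      · obtain ⟨y₀, hy₀⟩ := Finset.card_eq_one.mp h1
        by_cases hB0 : (Bf ω).card = 0
        · have hy₀mem : y₀ ∈ Vf ω := hy₀ ▸ Finset.mem_singleton_self y₀
          have hyTx : y₀ ∈ Tx ∧ InInterval ω.2.1 ω.2.2 l y₀ := by
            rw [hVf] at hy₀mem; exact Finset.mem_filter.mp hy₀mem
          have hyYZ : y₀ ∈ Y ∧ -x - y₀ ∈ Z := by
            have := Finset.mem_filter.mp (hTx ▸ hyTx.1); exact this.2
          have hgood : ∃ y z, IsGoodTriangle X Y Z ω.1 ω.2.1 ω.2.2 l x y z := by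
            refine ⟨y₀, -x - y₀, ⟨⟨hx, hyYZ.1, hyYZ.2, by ring⟩, hIx, hyTx.2⟩, ?_⟩
            intro x' y' z' hval hshare
            have hz' : z' = -x' - y' := by linear_combination hval.1.2.2.2
            have hW : (x', y') ∈ Wf ω := by
              rw [hWf]
              simp only [Finset.mem_filter]
              refine ⟨?_, hval.2.1, hval.2.2⟩
              rw [hTri2]
              simp only [Finset.mem_filter, Finset.mem_univ, true_and]
              exact ⟨hval.1.1, hval.1.2.1, hz' ▸ hval.1.2.2.1⟩
            by_cases hqeq : (x', y') = (x, y₀)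
            · have hx' : x' = x := congrArg Prod.fst hqeq
              have hy' : y' = y₀ := congrArg Prod.snd hqeq
              exact ⟨hx', hy', by rw [hz', hx', hy']⟩
            · exfalso
              have hmemB : (y₀, (x', y')) ∈ Bf ω := by
                rw [hBf]
                simp only [Finset.mem_filter, Finset.mem_product]
                refine ⟨⟨hy₀mem, hW⟩, hqeq, ?_⟩
                rcases hshare with h | h | h
                · exact Or.inl h
                · exact Or.inr (Or.inl h)
                · refine Or.inr (Or.inr ?_)
                  have : -x' - y' = -x - y₀ := by rw [← hz', h]
                  linear_combination -this
              exact (Finset.card_ne_zero_of_mem hmemB) hB0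
          rw [if_pos hgood, h1, hB0]
          norm_num
        · have h1B : 1 ≤ (Bf ω).card := Nat.one_le_iff_ne_zero.mpr hB0
          have : (1:ℝ) ≤ ((Bf ω).card : ℝ) := by exact_mod_cast h1B
          rw [h1]
          push_cast
          linarith
      · have h0 : (Vf ω).card = 0 := by omega
        rw [h0]
        have : (0:ℝ) ≤ ((Bf ω).card : ℝ) := Nat.cast_nonneg _
        push_cast
        linarith
  -- identify the two ncards
  have hLHS : ({p : ZMod N × ZMod N × ZMod N | p.2.2 ≠ 0 ∧ InInterval p.1 p.2.2 l x}.ncard : ℝ)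
      = (Ωf.card : ℝ) := by
    rw [ncard_setOf_eq]; norm_num [hΩf]
  have hRHS : ({p : ZMod N × ZMod N × ZMod N | p.2.2 ≠ 0 ∧ InInterval p.1 p.2.2 l x ∧
        ∃ y z, IsGoodTriangle X Y Z p.1 p.2.1 p.2.2 l x y z}.ncard : ℝ)
      = ((Ωf.filter (fun ω => ∃ y z, IsGoodTriangle X Y Z ω.1 ω.2.1 ω.2.2 l x y z)).card : ℝ) := by
    rw [ncard_setOf_eq]
    norm_num [hΩf, Finset.filter_filter, and_assoc]
  rw [hLHS, hRHS]
  have hsum : ∑ ω ∈ Ωf, ((Vf ω).card : ℝ) - ∑ ω ∈ Ωf, ((Bf ω).card : ℝ) ≤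
      ((Ωf.filter (fun ω => ∃ y z, IsGoodTriangle X Y Z ω.1 ω.2.1 ω.2.2 l x y z)).card : ℝ) := by
    rw [← Finset.sum_sub_distrib]
    calc ∑ ω ∈ Ωf, (((Vf ω).card : ℝ) - ((Bf ω).card:ℝ))
        ≤ ∑ ω ∈ Ωf, (if (∃ y z, IsGoodTriangle X Y Z ω.1 ω.2.1 ω.2.2 l x y z) then (1:ℝ) else 0) :=
          Finset.sum_le_sum hpoint
      _ = _ := by rw [Finset.sum_boole]
  -- final arithmetic
  have hNL : (2*(l:ℝ)+1) + 1 ≤ (N:ℝ) := by exact_mod_cast (by omega : 2*l+1+1 ≤ N)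
  have hl1 : (1:ℝ) ≤ (l:ℝ) := by exact_mod_cast hl
  have htpos : (0:ℝ) ≤ (Tx.card:ℝ) := Nat.cast_nonneg _
  have ht1 := hTxb.1
  have hNpos : (0:ℝ) < (N:ℝ) := by exact_mod_cast hN.pos
  have e1 : δ₁ / (50*δ₂) ≤ (2/5) * δ₁ * (2*(l:ℝ)+1) := by
    rw [div_le_iff₀ (by positivity)]
    nlinarith [mul_nonneg hδ₁.le (sub_nonneg.mpr hL1)]
  have e2 : 3*δ₂*(2*(l:ℝ))*(N:ℝ) ≤ (3/5)*((N:ℝ)-1) := by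
    have p1 := mul_le_mul_of_nonneg_right hL2 hNpos.le
    have p2 := mul_nonneg hδ₂.le hNpos.le
    nlinarith [p1, p2, hNL, hl1]
  have haveA : (2/5)*((N:ℝ)-1) ≤ ((N:ℝ)-1) - 3*δ₂*(2*(l:ℝ))*(N:ℝ) := by linarith
  have hAnn : (0:ℝ) ≤ (2/5)*((N:ℝ)-1) := by nlinarith [hNL, hl1]
  have hc : δ₁*(N:ℝ) * ((2/5)*((N:ℝ)-1)) ≤
      (Tx.card:ℝ) * (((N:ℝ)-1) - 3*δ₂*(2*(l:ℝ))*(N:ℝ)) :=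
    mul_le_mul ht1 haveA hAnn htpos
  calc δ₁/(50*δ₂) * (Ωf.card:ℝ)
      ≤ ((2/5)*δ₁*(2*(l:ℝ)+1)) * ((2*(l:ℝ)+1) * (N:ℝ) * ((N:ℝ)-1)) := by
        apply mul_le_mul e1 hΩcard (Nat.cast_nonneg _) (by positivity)
    _ = (δ₁*(N:ℝ)*((2/5)*((N:ℝ)-1))) * (2*(l:ℝ)+1)^2 := by ring
    _ ≤ ((Tx.card:ℝ) * (((N:ℝ)-1) - 3*δ₂*(2*(l:ℝ))*(N:ℝ))) * (2*(l:ℝ)+1)^2 := by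
        apply mul_le_mul_of_nonneg_right hc (by positivity)
    _ = (Tx.card:ℝ) * (((N:ℝ)-1) * (2*(l:ℝ)+1)^2)
        - 3*(Tx.card:ℝ)*(δ₂*(N:ℝ))*((2*(l:ℝ)+1)^2*(2*(l:ℝ))) := by ring
    _ ≤ ∑ ω ∈ Ωf, ((Vf ω).card : ℝ) - ∑ ω ∈ Ωf, ((Bf ω).card : ℝ) := by
        have := hSV
        have := hSB
        push_cast at this ⊢
        linarith [hSV, hSB]
    _ ≤ _ := hsum
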